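/- Assume the maximum setup: u, v : ℝ^d → ℝ are bounded Borel measurable, φ : [0,∞) → ℝ is C² with φ' ≥ 0 and φ'' ≤ 0, and ψ(x,y) := u(x) − v(y) − φ(‖x−y‖) attains a global maximum at (x̄, ȳ) with x̄ ≠ ȳ; set a := x̄ − ȳ, â := a/‖a‖ and p := φ'(‖a‖)·â. Let δ₀, η ∈ (0,1) satisfy 1 − η − δ₀ > 0, set δ := ‖a‖δ₀ and assume δ ≤ 1. Let μ₁, μ₂, μ*, μ⁺, μ⁻ be nonnegative Borel measures on ℝ^d with μ₁ = μ* + μ⁺ and μ₂ = μ* + μ⁻ (so μ⁺ + μ⁻ plays the role of the total variation |μ₁ − μ₂|), and assume all integrands appearing below are integrable with respect to the indicated measures. Then ∫_{B \ C_{η,δ}(a)} (u(x̄+z) − u(x̄) − ⟨p, z⟩) dμ₁(z) − ∫_{B \ C_{η,δ}(a)} (v(ȳ+z) − v(ȳ) − ⟨p, z⟩) dμ₂(z) ≤ 2φ'(‖a‖) ∫_{B \ B_δ} ‖z‖ d(μ⁺+μ⁻)(z) + ∫_{B_δ \ C_{η,δ}(a)} sup_{s∈[−1,1]} ( φ'(‖a+sz‖)/‖a+sz‖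 ) ‖z‖² d(μ⁺+μ⁻)(z). -/

import Mathlib

open MeasureTheory RealInnerProductSpace Set

private lemma aux_anti (φ : ℝ → ℝ) (hφ : ContDiff ℝ 2 φ)
    (hφ'' : ∀ t : ℝ, 0 ≤ t → deriv (deriv φ) t ≤ 0) :
    AntitoneOn (deriv φ) (Ici 0) := by
  have hφ1 : ContDiff ℝ 1 (deriv φ) :=
    (contDiff_succ_iff_deriv.mp (by exact_mod_cast hφ : ContDiff ℝ ((1:ℕ)+1) φ)).2.2
  have hd2 : Differentiable ℝ (deriv φ) := hφ1.differentiable (by norm_num)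
  apply antitoneOn_of_deriv_nonpos (convex_Ici 0) hd2.continuous.continuousOn
    hd2.differentiableOn
  intro t ht
  rw [interior_Ici] at ht
  exact hφ'' t ht.le

private lemma aux_tangent (φ : ℝ → ℝ) (hφ : ContDiff ℝ 2 φ)
    (hφ'' : ∀ t : ℝ, 0 ≤ t → deriv (deriv φ) t ≤ 0) :
    ∀ r t : ℝ, 0 ≤ r → 0 ≤ t → φ t ≤ φ r + deriv φ r * (t - r) := by
  have hφdiff : Differentiable ℝ φ := hφ.differentiable (by norm_num)
  have hanti : AntitoneOn (deriv φ) (Ici 0) := aux_anti φ hφ hφ''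
  intro r t hr ht
  set c := deriv φ r with hc
  set F : ℝ → ℝ := fun s => φ r + c * (s - r) - φ s with hF
  have hFd : ∀ x, HasDerivAt F (c - deriv φ x) x := by
    intro x
    have h1 : HasDerivAt (fun s : ℝ => φ r + c * (s - r)) c x := by
      simpa using (((hasDerivAt_id x).sub_const r).const_mul c).const_add (φ r)
    exact h1.sub (hφdiff x).hasDerivAt
  have hF0 : F r = 0 := by simp [hF]
  have key : 0 ≤ F t := by
    rcases le_total r t with hrt | hrt
    · have hmono : MonotoneOn F (Ici r) := by
        apply monotoneOn_of_deriv_nonneg (convex_Ici r)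
          (fun x _ => ((hFd x).differentiableAt.continuousAt.continuousWithinAt))
          (fun x _ => (hFd x).differentiableAt.differentiableWithinAt)
        intro x hx
        rw [interior_Ici] at hx
        rw [(hFd x).deriv]
        have := hanti (hr : r ∈ Ici (0:ℝ)) (le_trans hr hx.le : x ∈ Ici (0:ℝ)) hx.le
        linarith
      have := hmono (self_mem_Ici) (hrt : t ∈ Ici r) hrt
      linarith [hF0]
    · have hmono : AntitoneOn F (Icc 0 r) := by
        apply antitoneOn_of_deriv_nonpos (convex_Icc 0 r)
          (fun x _ => ((hFd x).differentiableAt.continuousAt.continuousWithinAt))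
          (fun x _ => (hFd x).differentiableAt.differentiableWithinAt)
        intro x hx
        rw [interior_Icc] at hx
        rw [(hFd x).deriv]
        have := hanti (hx.1.le : x ∈ Ici (0:ℝ)) (hr : r ∈ Ici (0:ℝ)) hx.2.le
        linarith
      have := hmono (⟨ht, hrt⟩ : t ∈ Icc 0 r) (⟨hr, le_rfl⟩ : r ∈ Icc 0 r) hrt
      linarith [hF0]
  simp only [hF] at key
  linarith

set_option maxHeartbeats 4000000 in
/-- **Estimate outside the cone for general nonlocal operators (Lemma est_NL3).**
In the maximum setup, with `μ₁ = μ* + μ⁺` and `μ₂ = μ* + μ⁻` (Jordan-type decomposition),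
the difference of the nonlocal terms over `B \ C_{η,δ}(a)` is bounded by
`2φ'(‖a‖)∫_{B \ B_δ} ‖z‖ d(μ⁺+μ⁻) + ∫_{B_δ \ C_{η,δ}(a)} sup_{|s|≤1} (φ'(‖a+sz‖)/‖a+sz‖) ‖z‖² d(μ⁺+μ⁻)`. -/
theorem outside_cone_estimate_general_nonlocal {d : ℕ}
    (u v : EuclideanSpace ℝ (Fin d) → ℝ)
    (hum : Measurable u) (hvm : Measurable v)
    (hub : ∃ C, ∀ x, |u x| ≤ C) (hvb : ∃ C, ∀ x, |v x| ≤ C)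
    (φ : ℝ → ℝ) (hφ : ContDiff ℝ 2 φ)
    (hφ' : ∀ t : ℝ, 0 ≤ t → 0 ≤ deriv φ t)
    (hφ'' : ∀ t : ℝ, 0 ≤ t → deriv (deriv φ) t ≤ 0)
    (xb yb : EuclideanSpace ℝ (Fin d)) (hxy : xb ≠ yb)
    (hmax : ∀ x y, u x - v y - φ ‖x - y‖ ≤ u xb - v yb - φ ‖xb - yb‖)
    (δ₀ η : ℝ) (hδ₀ : δ₀ ∈ Ioo (0:ℝ) 1) (hη : η ∈ Ioo (0:ℝ) 1)
    (hηδ₀ : 0 < 1 - η - δ₀)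
    (a : EuclideanSpace ℝ (Fin d)) (ha : a = xb - yb)
    (p : EuclideanSpace ℝ (Fin d)) (hp : p = deriv φ ‖a‖ • (‖a‖⁻¹ • a))
    (δ : ℝ) (hδ : δ = ‖a‖ * δ₀) (hδ1 : δ ≤ 1)
    (Cone : Set (EuclideanSpace ℝ (Fin d)))
    (hCone : Cone = {z | ‖z‖ ≤ δ ∧ (1 - η) * ‖z‖ * ‖a‖ ≤ abs ⟪a, z⟫})
    (μ₁ μ₂ μs μp μm : Measure (EuclideanSpace ℝ (Fin d)))
    (hμ₁ : μ₁ = μs + μp) (hμ₂ : μ₂ = μs + μm)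
    (g : EuclideanSpace ℝ (Fin d) → ℝ)
    (hg : ∀ z, g z = (⨆ s : Icc (-1:ℝ) 1,
        deriv φ ‖a + (s : ℝ) • z‖ / ‖a + (s : ℝ) • z‖) * ‖z‖ ^ 2)
    (hint1 : IntegrableOn (fun z => u (xb + z) - u xb - ⟪p, z⟫)
      (Metric.closedBall 0 1 \ Cone) μ₁)
    (hint2 : IntegrableOn (fun z => v (yb + z) - v yb - ⟪p, z⟫)
      (Metric.closedBall 0 1 \ Cone) μ₂)
    (hint3 : IntegrableOn (fun z => ‖z‖)
      (Metric.closedBall 0 1 \ Metric.closedBall 0 δ) (μp + μm))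
    (hint4 : IntegrableOn g (Metric.closedBall 0 δ \ Cone) (μp + μm)) :
    (∫ z in Metric.closedBall 0 1 \ Cone, (u (xb + z) - u xb - ⟪p, z⟫) ∂μ₁)
      - ∫ z in Metric.closedBall 0 1 \ Cone, (v (yb + z) - v yb - ⟪p, z⟫) ∂μ₂
    ≤ 2 * deriv φ ‖a‖
          * ∫ z in Metric.closedBall 0 1 \ Metric.closedBall 0 δ, ‖z‖ ∂(μp + μm)
      + ∫ z in Metric.closedBall 0 δ \ Cone, g z ∂(μp + μm) := by
  have ha0 : a ≠ 0 := by rw [ha]; exact sub_ne_zero.mpr hxy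
  have hna : 0 < ‖a‖ := norm_pos_iff.mpr ha0
  have hδpos : 0 < δ := by rw [hδ]; exact mul_pos hna hδ₀.1
  have hδa : δ < ‖a‖ := by rw [hδ]; nlinarith [hδ₀.2, hδ₀.1]
  have hφ'a : 0 ≤ deriv φ ‖a‖ := hφ' _ hna.le
  have tangent := aux_tangent φ hφ hφ''
  have hanti : AntitoneOn (deriv φ) (Ici 0) := aux_anti φ hφ hφ''
  have hpz : ∀ z : EuclideanSpace ℝ (Fin d),
      ⟪p, z⟫ = deriv φ ‖a‖ * (‖a‖⁻¹ * ⟪a, z⟫) := by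
    intro z; rw [hp, real_inner_smul_left, real_inner_smul_left]
  -- pointwise bound: u part
  have hF : ∀ z : EuclideanSpace ℝ (Fin d), u (xb + z) - u xb - ⟪p, z⟫ ≤
      deriv φ ‖a‖ * (‖a + z‖ - ‖a‖ - ‖a‖⁻¹ * ⟪a, z⟫) := by
    intro z
    have h := hmax (xb + z) yb
    have he : xb + z - yb = a + z := by rw [ha]; abel
    rw [he, ← ha] at h
    have ht := tangent ‖a‖ ‖a + z‖ hna.le (norm_nonneg _)
    rw [hpz z]
    have hr : deriv φ ‖a‖ * (‖a + z‖ - ‖a‖ - ‖a‖⁻¹ * ⟪a, z⟫)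
        = deriv φ ‖a‖ * (‖a + z‖ - ‖a‖) - deriv φ ‖a‖ * (‖a‖⁻¹ * ⟪a, z⟫) := by ring
    rw [hr]
    linarith
  -- pointwise bound: v part
  have hH : ∀ z : EuclideanSpace ℝ (Fin d), -(v (yb + z) - v yb - ⟪p, z⟫) ≤
      deriv φ ‖a‖ * (‖a + -z‖ - ‖a‖ - ‖a‖⁻¹ * ⟪a, -z⟫) := by
    intro z
    have h := hmax xb (yb + z)
    have he : xb - (yb + z) = a + -z := by rw [ha]; abel
    rw [he, ← ha] at h
    have ht := tangent ‖a‖ ‖a + -z‖ hna.le (norm_nonneg _)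
    rw [hpz z, inner_neg_right]
    have hr : deriv φ ‖a‖ * (‖a + -z‖ - ‖a‖ - ‖a‖⁻¹ * -⟪a, z⟫)
        = deriv φ ‖a‖ * (‖a + -z‖ - ‖a‖) + deriv φ ‖a‖ * (‖a‖⁻¹ * ⟪a, z⟫) := by ring
    rw [hr]
    linarith
  -- u - v difference is nonpositive
  have key0 : ∀ z : EuclideanSpace ℝ (Fin d),
      (u (xb + z) - u xb - ⟪p, z⟫) - (v (yb + z) - v yb - ⟪p, z⟫) ≤ 0 := by
    intro z
    have h := hmax (xb + z) (yb + z)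
    have he : xb + z - (yb + z) = xb - yb := by abel
    rw [he] at h
    linarith
  -- outer bound
  have houter : ∀ z w : EuclideanSpace ℝ (Fin d), ‖w‖ = ‖z‖ →
      deriv φ ‖a‖ * (‖a + w‖ - ‖a‖ - ‖a‖⁻¹ * ⟪a, w⟫) ≤ 2 * deriv φ ‖a‖ * ‖z‖ := by
    intro z w hw
    have h1 : ‖a + w‖ - ‖a‖ ≤ ‖w‖ := by linarith [norm_add_le a w]
    have h2 : |‖a‖⁻¹ * ⟪a, w⟫| ≤ ‖w‖ := by
      rw [abs_mul, abs_of_nonneg (inv_nonneg.mpr (norm_nonneg a))]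
      calc ‖a‖⁻¹ * |⟪a, w⟫| ≤ ‖a‖⁻¹ * (‖a‖ * ‖w‖) := by
            gcongr
            exact abs_real_inner_le_norm a w
        _ = ‖w‖ := by field_simp
    have h3 := abs_le.mp h2
    have hX : ‖a + w‖ - ‖a‖ - ‖a‖⁻¹ * ⟪a, w⟫ ≤ 2 * ‖w‖ := by linarith
    calc deriv φ ‖a‖ * (‖a + w‖ - ‖a‖ - ‖a‖⁻¹ * ⟪a, w⟫)
        ≤ deriv φ ‖a‖ * (2 * ‖w‖) := mul_le_mul_of_nonneg_left hX hφ'a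
      _ = 2 * deriv φ ‖a‖ * ‖z‖ := by rw [hw]; ring
  -- inner bound
  have hinner : ∀ z : EuclideanSpace ℝ (Fin d), ‖z‖ ≤ δ →
      ∀ s₀ : Icc (-1:ℝ) 1, ((s₀ : ℝ) = 1 ∨ (s₀ : ℝ) = -1) →
      deriv φ ‖a‖ * (‖a + (s₀ : ℝ) • z‖ - ‖a‖ - ‖a‖⁻¹ * ⟪a, (s₀ : ℝ) • z⟫) ≤ g z := by
    intro z hz s₀ hs₀
    set w : EuclideanSpace ℝ (Fin d) := (s₀ : ℝ) • z with hwdef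
    have hw : ‖w‖ = ‖z‖ := by
      rcases hs₀ with h | h <;> rw [hwdef, h] <;> simp [norm_smul]
    have hwδ : ‖w‖ ≤ δ := hw ▸ hz
    have hlow : ‖a‖ - δ ≤ ‖a + w‖ := by
      have h1 : ‖a‖ ≤ ‖a + w‖ + ‖w‖ := by
        calc ‖a‖ = ‖a + w + -w‖ := by simp
          _ ≤ ‖a + w‖ + ‖-w‖ := norm_add_le _ _
          _ = ‖a + w‖ + ‖w‖ := by rw [norm_neg]
      linarith
    have hpos : 0 < ‖a + w‖ := by linarith
    have hcb : |‖a‖⁻¹ * ⟪a, w⟫| ≤ ‖z‖ := by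
      rw [abs_mul, abs_of_nonneg (inv_nonneg.mpr (norm_nonneg a)), ← hw]
      calc ‖a‖⁻¹ * |⟪a, w⟫| ≤ ‖a‖⁻¹ * (‖a‖ * ‖w‖) := by
            gcongr
            exact abs_real_inner_le_norm a w
        _ = ‖w‖ := by field_simp
    have hc := abs_le.mp hcb
    have hsq : ‖a + w‖ ^ 2 = ‖a‖ ^ 2 + 2 * ⟪a, w⟫ + ‖z‖ ^ 2 := by
      rw [norm_add_sq_real, hw]
    have hinn : ⟪a, w⟫ = ‖a‖ * (‖a‖⁻¹ * ⟪a, w⟫) := by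
      field_simp
    have halg : ‖a + w‖ - ‖a‖ - ‖a‖⁻¹ * ⟪a, w⟫ ≤ ‖z‖ ^ 2 / ‖a + w‖ := by
      have hgen : ∀ c : ℝ, ⟪a, w⟫ = ‖a‖ * c → -‖z‖ ≤ c → c ≤ ‖z‖ →
          ‖a + w‖ - ‖a‖ - c ≤ ‖z‖ ^ 2 / ‖a + w‖ := by
        intro c hcdef hc1 hc2
        have hsqc : ‖a + w‖ ^ 2 = ‖a‖ ^ 2 + 2 * (‖a‖ * c) + ‖z‖ ^ 2 := by
          rw [hsq, hcdef]
        have hcsq : c ^ 2 ≤ ‖z‖ ^ 2 := sq_le_sq' hc1 hc2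
        have hplus : 0 ≤ ‖a‖ + c := by linarith
        have hle : ‖a‖ + c ≤ ‖a + w‖ := by nlinarith [hpos]
        have hprod : 0 ≤ (‖a‖ + c) * (‖a + w‖ - (‖a‖ + c)) :=
          mul_nonneg hplus (by linarith)
        rw [le_div_iff₀ hpos]
        nlinarith [hprod]
      exact hgen _ hinn hc.1 hc.2
    -- boundedness of the sup family
    have hbdd : BddAbove (range fun s : Icc (-1:ℝ) 1 =>
        deriv φ ‖a + (s : ℝ) • z‖ / ‖a + (s : ℝ) • z‖) := by
      have hcont : ContinuousOn (deriv φ) (Icc 0 (‖a‖ + 1)) :=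
        (hφ.continuous_deriv one_le_two).continuousOn
      obtain ⟨t₀, ht₀, hM⟩ := isCompact_Icc.exists_isMaxOn
        ⟨0, le_refl (0:ℝ), by positivity⟩ hcont
      refine ⟨deriv φ t₀ / (‖a‖ - δ), ?_⟩
      rintro y ⟨s, rfl⟩
      have hs1 : |(s : ℝ)| ≤ 1 := abs_le.mpr ⟨s.2.1, s.2.2⟩
      have hsz : ‖(s : ℝ) • z‖ ≤ δ := by
        rw [norm_smul]
        calc |(s : ℝ)| * ‖z‖ ≤ 1 * δ := by
              apply mul_le_mul hs1 hz (norm_nonneg z) zero_le_one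
          _ = δ := one_mul δ
      have hn1 : ‖a + (s : ℝ) • z‖ ≤ ‖a‖ + 1 := by
        linarith [norm_add_le a ((s : ℝ) • z)]
      have hn2 : ‖a‖ - δ ≤ ‖a + (s : ℝ) • z‖ := by
        have h1 : ‖a‖ ≤ ‖a + (s:ℝ) • z‖ + ‖(s:ℝ) • z‖ := by
          calc ‖a‖ = ‖a + (s:ℝ) • z + -((s:ℝ) • z)‖ := by simp
            _ ≤ ‖a + (s:ℝ) • z‖ + ‖-((s:ℝ) • z)‖ := norm_add_le _ _
            _ = ‖a + (s:ℝ) • z‖ + ‖(s:ℝ) • z‖ := by rw [norm_neg]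
        linarith
      exact div_le_div₀ (hφ' t₀ ht₀.1) (hM ⟨norm_nonneg _, hn1⟩) (by linarith) hn2
    have hsup : deriv φ ‖a‖ / ‖a + w‖ ≤ ⨆ s : Icc (-1:ℝ) 1,
        deriv φ ‖a + (s : ℝ) • z‖ / ‖a + (s : ℝ) • z‖ := by
      rcases le_or_gt ‖a‖ ‖a + w‖ with hcase | hcase
      · have t1 := le_ciSup hbdd (⟨0, by norm_num⟩ : Icc (-1:ℝ) 1)
        have t2 : deriv φ ‖a + ((0:ℝ)) • z‖ / ‖a + ((0:ℝ)) • z‖ = deriv φ ‖a‖ / ‖a‖ := by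
          simp
        calc deriv φ ‖a‖ / ‖a + w‖ ≤ deriv φ ‖a‖ / ‖a‖ := by
              apply div_le_div_of_nonneg_left hφ'a hna hcase
          _ ≤ _ := by rw [← t2]; exact t1
      · have hle : deriv φ ‖a‖ ≤ deriv φ ‖a + w‖ :=
          hanti (mem_Ici.mpr hpos.le) (mem_Ici.mpr hna.le) hcase.le
        have t1 := le_ciSup hbdd s₀
        rw [← hwdef] at t1
        calc deriv φ ‖a‖ / ‖a + w‖ ≤ deriv φ ‖a + w‖ / ‖a + w‖ := by gcongr
          _ ≤ _ := t1
    rw [hg z]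
    calc deriv φ ‖a‖ * (‖a + w‖ - ‖a‖ - ‖a‖⁻¹ * ⟪a, w⟫)
        ≤ deriv φ ‖a‖ * (‖z‖ ^ 2 / ‖a + w‖) := mul_le_mul_of_nonneg_left halg hφ'a
      _ = (deriv φ ‖a‖ / ‖a + w‖) * ‖z‖ ^ 2 := by ring
      _ ≤ _ := mul_le_mul_of_nonneg_right hsup (sq_nonneg _)
  -- set bookkeeping
  set S : Set (EuclideanSpace ℝ (Fin d)) := Metric.closedBall 0 1 \ Cone with hS
  set S1 : Set (EuclideanSpace ℝ (Fin d)) := Metric.closedBall 0 1 \ Metric.closedBall 0 δ with hS1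
  set S2 : Set (EuclideanSpace ℝ (Fin d)) := Metric.closedBall 0 δ \ Cone with hS2
  have hConeM : MeasurableSet Cone := by
    rw [hCone]
    have h1 : IsClosed {z : EuclideanSpace ℝ (Fin d) | ‖z‖ ≤ δ} := isClosed_le continuous_norm continuous_const
    have h2 : IsClosed {z : EuclideanSpace ℝ (Fin d) | (1 - η) * ‖z‖ * ‖a‖ ≤ |⟪a, z⟫|} :=
      isClosed_le ((continuous_const.mul continuous_norm).mul continuous_const)
        ((continuous_const.inner continuous_id).abs)
    rw [setOf_and]
    exact (h1.inter h2).measurableSet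
  have hS1M : MeasurableSet S1 := measurableSet_closedBall.diff measurableSet_closedBall
  have hS2M : MeasurableSet S2 := measurableSet_closedBall.diff hConeM
  have hCsub : Cone ⊆ Metric.closedBall 0 δ := by
    rw [hCone]
    intro z hz
    rw [Metric.mem_closedBall, dist_zero_right]
    exact hz.1
  have hsplit : S = S1 ∪ S2 := by
    ext z
    simp only [hS, hS1, hS2, mem_diff, mem_union, Metric.mem_closedBall, dist_zero_right]
    constructor
    · rintro ⟨h1, h2⟩
      by_cases hzd : ‖z‖ ≤ δ
      · exact Or.inr ⟨hzd, h2⟩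
      · exact Or.inl ⟨h1, hzd⟩
    · rintro (⟨h1, h2⟩ | ⟨h1, h2⟩)
      · refine ⟨h1, fun hc => h2 ?_⟩
        have := hCsub hc
        rwa [Metric.mem_closedBall, dist_zero_right] at this
      · exact ⟨h1.trans hδ1, h2⟩
  have hdisj : Disjoint S1 S2 := by
    rw [Set.disjoint_left]
    rintro z ⟨_, h2⟩ ⟨h3, _⟩
    exact h2 h3
  -- integrability splits
  rw [hμ₁] at hint1
  rw [hμ₂] at hint2
  rw [IntegrableOn, Measure.restrict_add, integrable_add_measure] at hint1 hint2 hint3 hint4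
  obtain ⟨h1s, h1p⟩ := hint1
  obtain ⟨h2s, h2m⟩ := hint2
  obtain ⟨h3p, h3m⟩ := hint3
  obtain ⟨h4p, h4m⟩ := hint4
  have h1pS1 : IntegrableOn (fun z => u (xb + z) - u xb - ⟪p, z⟫) S1 μp :=
    IntegrableOn.mono_set h1p (by rw [hsplit]; exact subset_union_left)
  have h1pS2 : IntegrableOn (fun z => u (xb + z) - u xb - ⟪p, z⟫) S2 μp :=
    IntegrableOn.mono_set h1p (by rw [hsplit]; exact subset_union_right)
  have h2mS1 : IntegrableOn (fun z => v (yb + z) - v yb - ⟪p, z⟫) S1 μm :=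
    IntegrableOn.mono_set h2m (by rw [hsplit]; exact subset_union_left)
  have h2mS2 : IntegrableOn (fun z => v (yb + z) - v yb - ⟪p, z⟫) S2 μm :=
    IntegrableOn.mono_set h2m (by rw [hsplit]; exact subset_union_right)
  -- pointwise bounds specialized to sets
  have hFS1 : ∀ z : EuclideanSpace ℝ (Fin d), u (xb + z) - u xb - ⟪p, z⟫ ≤ 2 * deriv φ ‖a‖ * ‖z‖ :=
    fun z => (hF z).trans (houter z z rfl)
  have hHS1 : ∀ z : EuclideanSpace ℝ (Fin d), -(v (yb + z) - v yb - ⟪p, z⟫) ≤ 2 * deriv φ ‖a‖ * ‖z‖ :=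
    fun z => (hH z).trans (houter z (-z) (norm_neg z))
  have hFS2 : ∀ z ∈ S2, u (xb + z) - u xb - ⟪p, z⟫ ≤ g z := by
    intro z hzm
    have hz : ‖z‖ ≤ δ := by
      have := hzm.1
      rwa [Metric.mem_closedBall, dist_zero_right] at this
    have h1 := hinner z hz ⟨1, by norm_num⟩ (Or.inl rfl)
    rw [show ((⟨1, by norm_num⟩ : Icc (-1:ℝ) 1) : ℝ) • z = z from one_smul ℝ z] at h1
    exact (hF z).trans h1
  have hHS2 : ∀ z ∈ S2, -(v (yb + z) - v yb - ⟪p, z⟫) ≤ g z := by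
    intro z hzm
    have hz : ‖z‖ ≤ δ := by
      have := hzm.1
      rwa [Metric.mem_closedBall, dist_zero_right] at this
    have h1 := hinner z hz ⟨-1, by norm_num⟩ (Or.inr rfl)
    rw [show ((⟨-1, by norm_num⟩ : Icc (-1:ℝ) 1) : ℝ) • z = -z from neg_one_smul ℝ z] at h1
    exact (hH z).trans h1
  -- rewrite the goal
  rw [hμ₁, hμ₂]
  have e1 : ∫ z in S, (u (xb + z) - u xb - ⟪p, z⟫) ∂(μs + μp)
      = (∫ z in S, (u (xb + z) - u xb - ⟪p, z⟫) ∂μs)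
        + ∫ z in S, (u (xb + z) - u xb - ⟪p, z⟫) ∂μp := by
    rw [Measure.restrict_add]; exact integral_add_measure h1s h1p
  have e2 : ∫ z in S, (v (yb + z) - v yb - ⟪p, z⟫) ∂(μs + μm)
      = (∫ z in S, (v (yb + z) - v yb - ⟪p, z⟫) ∂μs)
        + ∫ z in S, (v (yb + z) - v yb - ⟪p, z⟫) ∂μm := by
    rw [Measure.restrict_add]; exact integral_add_measure h2s h2m
  have e3 : ∫ z in S1, ‖z‖ ∂(μp + μm)
      = (∫ z in S1, ‖z‖ ∂μp) + ∫ z in S1, ‖z‖ ∂μm := by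
    rw [Measure.restrict_add]; exact integral_add_measure h3p h3m
  have e4 : ∫ z in S2, g z ∂(μp + μm)
      = (∫ z in S2, g z ∂μp) + ∫ z in S2, g z ∂μm := by
    rw [Measure.restrict_add]; exact integral_add_measure h4p h4m
  rw [e1, e2, e3, e4]
  -- μs part
  have c1 : (∫ z in S, (u (xb + z) - u xb - ⟪p, z⟫) ∂μs)
      - ∫ z in S, (v (yb + z) - v yb - ⟪p, z⟫) ∂μs ≤ 0 := by
    rw [← integral_sub h1s h2s]
    exact integral_nonpos fun z => key0 z
  -- μp part
  have c2 : ∫ z in S, (u (xb + z) - u xb - ⟪p, z⟫) ∂μp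
      ≤ 2 * deriv φ ‖a‖ * (∫ z in S1, ‖z‖ ∂μp) + ∫ z in S2, g z ∂μp := by
    rw [hsplit, setIntegral_union hdisj hS2M h1pS1 h1pS2]
    have b1 : ∫ z in S1, (u (xb + z) - u xb - ⟪p, z⟫) ∂μp
        ≤ ∫ z in S1, 2 * deriv φ ‖a‖ * ‖z‖ ∂μp :=
      setIntegral_mono_on h1pS1 (h3p.const_mul _) hS1M fun z _ => hFS1 z
    have b2 : ∫ z in S1, 2 * deriv φ ‖a‖ * ‖z‖ ∂μp
        = 2 * deriv φ ‖a‖ * ∫ z in S1, ‖z‖ ∂μp := integral_const_mul _ _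
    have b3 : ∫ z in S2, (u (xb + z) - u xb - ⟪p, z⟫) ∂μp ≤ ∫ z in S2, g z ∂μp :=
      setIntegral_mono_on h1pS2 h4p hS2M hFS2
    linarith
  -- μm part
  have c3 : -(∫ z in S, (v (yb + z) - v yb - ⟪p, z⟫) ∂μm)
      ≤ 2 * deriv φ ‖a‖ * (∫ z in S1, ‖z‖ ∂μm) + ∫ z in S2, g z ∂μm := by
    have hneg : ∫ z in S, -(v (yb + z) - v yb - ⟪p, z⟫) ∂μm
        = -(∫ z in S, (v (yb + z) - v yb - ⟪p, z⟫) ∂μm) := integral_neg _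
    have hunion : ∫ z in S, -(v (yb + z) - v yb - ⟪p, z⟫) ∂μm
        = (∫ z in S1, -(v (yb + z) - v yb - ⟪p, z⟫) ∂μm)
          + ∫ z in S2, -(v (yb + z) - v yb - ⟪p, z⟫) ∂μm := by
      rw [hsplit]
      exact setIntegral_union hdisj hS2M h2mS1.neg h2mS2.neg
    rw [← hneg, hunion]
    have b1 : ∫ z in S1, -(v (yb + z) - v yb - ⟪p, z⟫) ∂μm
        ≤ ∫ z in S1, 2 * deriv φ ‖a‖ * ‖z‖ ∂μm :=
      setIntegral_mono_on h2mS1.neg (h3m.const_mul _) hS1M fun z _ => hHS1 z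
    have b2 : ∫ z in S1, 2 * deriv φ ‖a‖ * ‖z‖ ∂μm
        = 2 * deriv φ ‖a‖ * ∫ z in S1, ‖z‖ ∂μm := integral_const_mul _ _
    have b3 : ∫ z in S2, -(v (yb + z) - v yb - ⟪p, z⟫) ∂μm ≤ ∫ z in S2, g z ∂μm :=
      setIntegral_mono_on h2mS2.neg h4m hS2M hHS2
    linarith
  have hdist : 2 * deriv φ ‖a‖ * ((∫ z in S1, ‖z‖ ∂μp) + ∫ z in S1, ‖z‖ ∂μm)
      = 2 * deriv φ ‖a‖ * (∫ z in S1, ‖z‖ ∂μp)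
        + 2 * deriv φ ‖a‖ * (∫ z in S1, ‖z‖ ∂μm) := by ring
  linarith
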